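/- Maurer's method for log-Sobolev inequalities: Let X ∼ P, let f be a measurable real-valued function with E_P[exp(λf(X))] < ∞ for all λ ≥ 0, and suppose there exist a constant c > 0 and a number Γ ≥ 0 such that Var^{(λf)}[f(X)] ≤ c·Γ² for all λ ≥ 0, where Var^{(λf)} denotes variance under the tilted distribution P^{(λf)}. Then D(P^{(λf)} ‖ P) ≤ (1/2)·λ²·c·Γ² for all λ ≥ 0. -/

import Mathlib

open MeasureTheory ProbabilityTheory Real
open scoped ENNReal

/-- The relative entropy (Kullback–Leibler divergence, in nats) `D(Q‖P) = ∫ log (dQ/dP) dQ`,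
with value `∞` when `Q` is not absolutely continuous with respect to `P` or the integrand is
not integrable. -/
noncomputable def relEnt {Ω : Type*} [MeasurableSpace Ω] (Q P : Measure Ω) : ℝ≥0∞ :=
  open Classical in
  if Q ≪ P ∧ Integrable (fun ω => Real.log (Q.rnDeriv P ω).toReal) Q
  then ENNReal.ofReal (∫ ω, Real.log (Q.rnDeriv P ω).toReal ∂Q)
  else ⊤

section MaurerHelpers

variable {Ω : Type*} [MeasurableSpace Ω] {P : Measure Ω} {f : Ω → ℝ}

private lemma maurer_t_le {δ t : ℝ} (hδ : 0 < δ) : t ≤ δ⁻¹ * Real.exp (δ * t) := by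
  rw [le_inv_mul_iff₀ hδ]
  linarith [Real.add_one_le_exp (δ * t)]

private lemma maurer_exp_abs {δ a x : ℝ} :
    Real.exp (δ * |x|) * Real.exp (a * x) ≤ Real.exp ((a+δ)*x) + Real.exp ((a-δ)*x) := by
  rcases le_or_gt 0 x with hx | hx
  · rw [abs_of_nonneg hx, ← Real.exp_add]
    have : δ * x + a * x = (a+δ)*x := by ring
    rw [this]
    linarith [Real.exp_pos ((a-δ)*x)]
  · rw [abs_of_neg hx, ← Real.exp_add]
    have : δ * -x + a * x = (a-δ)*x := by ring
    rw [this]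
    linarith [Real.exp_pos ((a+δ)*x)]

private lemma maurer_bndA {δ a x : ℝ} (hδ : 0 < δ) :
    |x| * Real.exp (a * x) ≤ δ⁻¹ * (Real.exp ((a+δ)*x) + Real.exp ((a-δ)*x)) := by
  calc |x| * Real.exp (a * x) ≤ (δ⁻¹ * Real.exp (δ * |x|)) * Real.exp (a * x) :=
        mul_le_mul_of_nonneg_right (maurer_t_le hδ) (Real.exp_pos _).le
    _ = δ⁻¹ * (Real.exp (δ * |x|) * Real.exp (a * x)) := by ring
    _ ≤ δ⁻¹ * (Real.exp ((a+δ)*x) + Real.exp ((a-δ)*x)) :=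
        mul_le_mul_of_nonneg_left maurer_exp_abs (by positivity)

private lemma maurer_bndB {δ a x : ℝ} (hδ : 0 < δ) :
    x^2 * Real.exp (a * x) ≤ (2/δ)^2 * (Real.exp ((a+δ)*x) + Real.exp ((a-δ)*x)) := by
  have h1 : |x| ≤ (δ/2)⁻¹ * Real.exp ((δ/2) * |x|) := maurer_t_le (by positivity)
  have h2 : x^2 ≤ (2/δ)^2 * Real.exp (δ * |x|) := by
    have := mul_self_le_mul_self (abs_nonneg x) h1
    calc x^2 = |x| * |x| := by rw [abs_mul_abs_self]; ring
      _ ≤ ((δ/2)⁻¹ * Real.exp ((δ/2) * |x|)) * ((δ/2)⁻¹ * Real.exp ((δ/2) * |x|)) := this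
      _ = (2/δ)^2 * (Real.exp ((δ/2) * |x|) * Real.exp ((δ/2) * |x|)) := by field_simp
      _ = (2/δ)^2 * Real.exp (δ * |x|) := by
          rw [← Real.exp_add]
          congr 1
          ring
  calc x^2 * Real.exp (a * x) ≤ ((2/δ)^2 * Real.exp (δ * |x|)) * Real.exp (a * x) :=
        mul_le_mul_of_nonneg_right h2 (Real.exp_pos _).le
    _ = (2/δ)^2 * (Real.exp (δ * |x|) * Real.exp (a * x)) := by ring
    _ ≤ (2/δ)^2 * (Real.exp ((a+δ)*x) + Real.exp ((a-δ)*x)) :=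
        mul_le_mul_of_nonneg_left maurer_exp_abs (by positivity)

private lemma maurer_intA (hfmeas : Measurable f)
    (hexp : ∀ lam : ℝ, 0 ≤ lam → Integrable (fun ω => Real.exp (lam * f ω)) P)
    {a δ : ℝ} (hδ : 0 < δ) (hδa : δ ≤ a) :
    Integrable (fun ω => |f ω| * Real.exp (a * f ω)) P := by
  have hint : Integrable (fun ω => δ⁻¹ * (Real.exp ((a+δ) * f ω) + Real.exp ((a-δ) * f ω))) P := by
    simpa using ((hexp (a+δ) (by linarith)).add (hexp (a-δ) (by linarith))).const_mul δ⁻¹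
  refine hint.mono' (hfmeas.abs.mul ((hfmeas.const_mul a).exp)).aestronglyMeasurable ?_
  filter_upwards with ω
  rw [Real.norm_eq_abs, abs_mul, abs_abs, abs_of_pos (Real.exp_pos _)]
  exact maurer_bndA hδ

private lemma maurer_intA' (hfmeas : Measurable f)
    (hexp : ∀ lam : ℝ, 0 ≤ lam → Integrable (fun ω => Real.exp (lam * f ω)) P)
    {a : ℝ} (ha : 0 < a) :
    Integrable (fun ω => f ω * Real.exp (a * f ω)) P := by
  refine (maurer_intA hfmeas hexp ha le_rfl).mono'
    ((hfmeas.mul ((hfmeas.const_mul a).exp)).aestronglyMeasurable) ?_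
  filter_upwards with ω
  rw [Real.norm_eq_abs, abs_mul, abs_of_pos (Real.exp_pos _)]

private lemma maurer_intB (hfmeas : Measurable f)
    (hexp : ∀ lam : ℝ, 0 ≤ lam → Integrable (fun ω => Real.exp (lam * f ω)) P)
    {a δ : ℝ} (hδ : 0 < δ) (hδa : δ ≤ a) :
    Integrable (fun ω => f ω ^ 2 * Real.exp (a * f ω)) P := by
  have hint : Integrable
      (fun ω => (2/δ)^2 * (Real.exp ((a+δ) * f ω) + Real.exp ((a-δ) * f ω))) P := by
    simpa using ((hexp (a+δ) (by linarith)).add (hexp (a-δ) (by linarith))).const_mul ((2/δ)^2)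
  refine hint.mono' ((hfmeas.pow_const 2).mul ((hfmeas.const_mul a).exp)).aestronglyMeasurable ?_
  filter_upwards with ω
  rw [Real.norm_eq_abs, abs_mul, abs_of_pos (Real.exp_pos _), abs_of_nonneg (sq_nonneg _)]
  exact maurer_bndB hδ

private lemma maurer_hasDerivZ (hfmeas : Measurable f)
    (hexp : ∀ lam : ℝ, 0 ≤ lam → Integrable (fun ω => Real.exp (lam * f ω)) P)
    {a : ℝ} (ha : 0 < a) :
    HasDerivAt (fun s => ∫ ω, Real.exp (s * f ω) ∂P)
      (∫ ω, f ω * Real.exp (a * f ω) ∂P) a := by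
  have hb : Integrable
      (fun ω => |f ω| * Real.exp (3*a/2 * f ω) + |f ω| * Real.exp (a/2 * f ω)) P :=
    (maurer_intA hfmeas hexp (by positivity : (0:ℝ) < a/2) (by linarith)).add
      (maurer_intA hfmeas hexp (by positivity : (0:ℝ) < a/2) (by linarith))
  refine (hasDerivAt_integral_of_dominated_loc_of_deriv_le (s := Metric.ball a (a/2))
    (F' := fun s ω => f ω * Real.exp (s * f ω)) (Metric.ball_mem_nhds a (by positivity))
    (Filter.Eventually.of_forall fun s => ((hfmeas.const_mul s).exp).aestronglyMeasurable)
    (hexp a ha.le)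
    ((hfmeas.mul ((hfmeas.const_mul a).exp)).aestronglyMeasurable)
    ?_ hb ?_).2
  · filter_upwards with ω s hs
    rw [Metric.mem_ball, Real.dist_eq, abs_lt] at hs
    rw [Real.norm_eq_abs, abs_mul, abs_of_pos (Real.exp_pos _)]
    rcases le_or_gt 0 (f ω) with hx | hx
    · have : Real.exp (s * f ω) ≤ Real.exp (3*a/2 * f ω) := by
        apply Real.exp_le_exp.2; nlinarith
      have h2 : (0:ℝ) ≤ |f ω| * Real.exp (a/2 * f ω) := by positivity
      nlinarith [abs_nonneg (f ω)]
    · have : Real.exp (s * f ω) ≤ Real.exp (a/2 * f ω) := by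
        apply Real.exp_le_exp.2; nlinarith
      have h2 : (0:ℝ) ≤ |f ω| * Real.exp (3*a/2 * f ω) := by positivity
      nlinarith [abs_nonneg (f ω)]
  · filter_upwards with ω s _
    simpa [mul_comm] using ((hasDerivAt_id s).mul_const (f ω)).exp

private lemma maurer_hasDerivM1 (hfmeas : Measurable f)
    (hexp : ∀ lam : ℝ, 0 ≤ lam → Integrable (fun ω => Real.exp (lam * f ω)) P)
    {a : ℝ} (ha : 0 < a) :
    HasDerivAt (fun s => ∫ ω, f ω * Real.exp (s * f ω) ∂P)
      (∫ ω, f ω ^ 2 * Real.exp (a * f ω) ∂P) a := by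
  have hb : Integrable
      (fun ω => f ω ^ 2 * Real.exp (3*a/2 * f ω) + f ω ^ 2 * Real.exp (a/2 * f ω)) P :=
    (maurer_intB hfmeas hexp (by positivity : (0:ℝ) < a/2) (by linarith)).add
      (maurer_intB hfmeas hexp (by positivity : (0:ℝ) < a/2) (by linarith))
  refine (hasDerivAt_integral_of_dominated_loc_of_deriv_le (s := Metric.ball a (a/2))
    (F' := fun s ω => f ω ^ 2 * Real.exp (s * f ω)) (Metric.ball_mem_nhds a (by positivity))
    (Filter.Eventually.of_forall fun s =>
      (hfmeas.mul ((hfmeas.const_mul s).exp)).aestronglyMeasurable)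
    (maurer_intA' hfmeas hexp ha)
    (((hfmeas.pow_const 2).mul ((hfmeas.const_mul a).exp)).aestronglyMeasurable)
    ?_ hb ?_).2
  · filter_upwards with ω s hs
    rw [Metric.mem_ball, Real.dist_eq, abs_lt] at hs
    rw [Real.norm_eq_abs, abs_mul, abs_of_pos (Real.exp_pos _), abs_of_nonneg (sq_nonneg _)]
    rcases le_or_gt 0 (f ω) with hx | hx
    · have : Real.exp (s * f ω) ≤ Real.exp (3*a/2 * f ω) := by
        apply Real.exp_le_exp.2; nlinarith
      nlinarith [sq_nonneg (f ω), Real.exp_pos (a/2 * f ω)]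
    · have : Real.exp (s * f ω) ≤ Real.exp (a/2 * f ω) := by
        apply Real.exp_le_exp.2; nlinarith
      nlinarith [sq_nonneg (f ω), Real.exp_pos (3*a/2 * f ω)]
  · filter_upwards with ω s _
    have h := (((hasDerivAt_id s).mul_const (f ω)).exp).const_mul (f ω)
    have h2 : f ω * (Real.exp (id s * f ω) * (1 * f ω)) = f ω ^ 2 * Real.exp (s * f ω) := by
      simp only [id_eq, one_mul]; ring
    rw [h2] at h
    exact h

private lemma maurer_tilt_integrable [IsProbabilityMeasure P] (hfmeas : Measurable f)
    {a : ℝ} {g : Ω → ℝ}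
    (hint : Integrable (fun ω => g ω * Real.exp (a * f ω)) P) :
    Integrable g (P.tilted (fun ω => a * f ω)) := by
  set Z := ∫ ω, Real.exp (a * f ω) ∂P with hZ
  rw [tilted_eq_withDensity_nnreal, integrable_withDensity_iff_integrable_smul₀]
  · refine (hint.div_const Z).congr ?_
    filter_upwards with ω
    simp only [NNReal.smul_def, NNReal.coe_mk, smul_eq_mul]
    rw [div_mul_eq_mul_div, mul_comm]
  · exact (measurable_coe_nnreal_real_iff.mp (by
      simpa using ((hfmeas.const_mul a).exp.div_const Z))).aemeasurable

private lemma maurer_integral_tilted [IsProbabilityMeasure P]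
    {a : ℝ} (g : Ω → ℝ) :
    ∫ ω, g ω ∂(P.tilted (fun ω => a * f ω))
      = (∫ ω, g ω * Real.exp (a * f ω) ∂P) / ∫ ω, Real.exp (a * f ω) ∂P := by
  rw [integral_tilted]
  simp_rw [smul_eq_mul, div_mul_eq_mul_div, mul_comm]
  rw [integral_div]

private lemma maurer_variance [IsProbabilityMeasure P] (hfmeas : Measurable f)
    (hexp : ∀ lam : ℝ, 0 ≤ lam → Integrable (fun ω => Real.exp (lam * f ω)) P)
    {a : ℝ} (ha : 0 < a) :
    variance f (P.tilted (fun ω => a * f ω))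
      = (∫ ω, f ω ^ 2 * Real.exp (a * f ω) ∂P) / (∫ ω, Real.exp (a * f ω) ∂P)
        - ((∫ ω, f ω * Real.exp (a * f ω) ∂P) / (∫ ω, Real.exp (a * f ω) ∂P)) ^ 2 := by
  haveI : IsProbabilityMeasure (P.tilted (fun ω => a * f ω)) :=
    isProbabilityMeasure_tilted (hexp a ha.le)
  have hsq : Integrable (fun ω => f ω ^ 2) (P.tilted (fun ω => a * f ω)) :=
    maurer_tilt_integrable hfmeas (maurer_intB hfmeas hexp ha le_rfl)
  have hmem : MemLp f 2 (P.tilted (fun ω => a * f ω)) :=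
    (memLp_two_iff_integrable_sq hfmeas.aestronglyMeasurable).2 hsq
  rw [variance_eq_sub hmem]
  congr 1
  · rw [show ((f ^ 2 : Ω → ℝ)) = fun ω => f ω ^ 2 from rfl]
    exact maurer_integral_tilted _
  · rw [maurer_integral_tilted f]

end MaurerHelpers

/-- **Maurer's method for log-Sobolev inequalities**: let `X ∼ P`, let `f` be measurable with
`E_P[exp (λ f)] < ∞` for all `λ ≥ 0`, and suppose there are a constant `c > 0` and a number
`Γ ≥ 0` such that `Var^{(λ f)}[f(X)] ≤ c Γ²` for all `λ ≥ 0`, the variance being computed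
under the tilted distribution `P^{(λ f)}`.  Then
`D(P^{(λ f)} ‖ P) ≤ (1/2) λ² c Γ²` for all `λ ≥ 0`. -/
theorem maurer_method_log_sobolev
    {Ω : Type*} [MeasurableSpace Ω] (P : Measure Ω) [IsProbabilityMeasure P]
    (f : Ω → ℝ) (hfmeas : Measurable f)
    (hexp : ∀ lam : ℝ, 0 ≤ lam → Integrable (fun ω => Real.exp (lam * f ω)) P)
    (c : ℝ) (hc : 0 < c) (Γ : ℝ) (hΓ : 0 ≤ Γ)
    (hvar : ∀ lam : ℝ, 0 ≤ lam →
      variance f (P.tilted (fun ω => lam * f ω)) ≤ c * Γ ^ 2) :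
    ∀ lam : ℝ, 0 ≤ lam →
      relEnt (P.tilted (fun ω => lam * f ω)) P
        ≤ ENNReal.ofReal ((1 / 2) * lam ^ 2 * c * Γ ^ 2) := by
  intro lam hlam
  rcases eq_or_lt_of_le hlam with hlam0 | hlam
  · -- case lam = 0
    subst hlam0
    have h0 : (fun ω => (0:ℝ) * f ω) = (0 : Ω → ℝ) := by funext ω; simp
    rw [h0, tilted_zero]
    have heq : (fun ω => Real.log ((P.rnDeriv P) ω).toReal) =ᵐ[P] fun _ => (0:ℝ) := by
      filter_upwards [Measure.rnDeriv_self P] with ω hω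
      rw [hω]
      simp
    have hint0 : Integrable (fun ω => Real.log ((P.rnDeriv P) ω).toReal) P :=
      (integrable_const (0:ℝ)).congr heq.symm
    rw [relEnt, if_pos ⟨Measure.AbsolutelyContinuous.refl P, hint0⟩]
    rw [integral_congr_ae heq]
    simp
  -- case lam > 0
  set Z : ℝ → ℝ := fun s => ∫ ω, Real.exp (s * f ω) ∂P with hZdef
  set M1 : ℝ → ℝ := fun s => ∫ ω, f ω * Real.exp (s * f ω) ∂P with hM1def
  set M2 : ℝ → ℝ := fun s => ∫ ω, f ω ^ 2 * Real.exp (s * f ω) ∂P with hM2def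
  have hZpos : ∀ s : ℝ, 0 ≤ s → 0 < Z s := fun s hs => integral_exp_pos (hexp s hs)
  set V : ℝ → ℝ := fun s => M2 s / Z s - (M1 s / Z s) ^ 2 with hVdef
  have hVvar : ∀ s : ℝ, 0 < s → variance f (P.tilted (fun ω => s * f ω)) = V s :=
    fun s hs => maurer_variance hfmeas hexp hs
  have hVle : ∀ s : ℝ, 0 < s → V s ≤ c * Γ ^ 2 := fun s hs =>
    (hVvar s hs) ▸ hvar s hs.le
  have hVnn : ∀ s : ℝ, 0 < s → 0 ≤ V s := fun s hs =>
    (hVvar s hs) ▸ variance_nonneg f _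
  -- derivatives
  have hψ' : ∀ s : ℝ, 0 < s → HasDerivAt (fun t => Real.log (Z t)) (M1 s / Z s) s :=
    fun s hs => (maurer_hasDerivZ hfmeas hexp hs).log (hZpos s hs.le).ne'
  have hφ' : ∀ s : ℝ, 0 < s →
      HasDerivAt (fun t => M1 t / Z t) (V s * Z s / Z s) s := by
    intro s hs
    have h := ((maurer_hasDerivM1 hfmeas hexp hs).div (maurer_hasDerivZ hfmeas hexp hs)
      (hZpos s hs.le).ne')
    refine h.congr_deriv ?_
    have hZ0 : Z s ≠ 0 := (hZpos s hs.le).ne'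
    show (M2 s * Z s - M1 s * M1 s) / Z s ^ 2 = V s * Z s / Z s
    rw [mul_div_assoc, div_self hZ0, mul_one]
    simp only [hVdef]
    field_simp
  have hφ'' : ∀ s : ℝ, 0 < s → HasDerivAt (fun t => M1 t / Z t) (V s) s := by
    intro s hs
    have := hφ' s hs
    rwa [mul_div_assoc, div_self (hZpos s hs.le).ne', mul_one] at this
  -- the auxiliary function h
  set h : ℝ → ℝ := fun s => c * Γ ^ 2 * s ^ 2 / 2 - s * (M1 s / Z s) + Real.log (Z s)
    with hhdef
  have hh' : ∀ s : ℝ, 0 < s → HasDerivAt h (s * (c * Γ ^ 2 - V s)) s := by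
    intro s hs
    have h1 : HasDerivAt (fun t : ℝ => c * Γ ^ 2 * t ^ 2 / 2) (c * Γ ^ 2 * s) s := by
      have := ((hasDerivAt_pow 2 s).const_mul (c * Γ ^ 2)).div_const 2
      refine this.congr_deriv ?_
      norm_num
      ring
    have h2 : HasDerivAt (fun t : ℝ => t * (M1 t / Z t)) (M1 s / Z s + s * V s) s := by
      have := (hasDerivAt_id s).mul (hφ'' s hs)
      refine this.congr_deriv ?_
      simp only [id_eq]
      ring
    have := (h1.sub h2).add (hψ' s hs)
    refine this.congr_deriv ?_
    ring
  -- h is monotone on [ε, lam]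
  have hmono : ∀ ε : ℝ, 0 < ε → ε ≤ lam → h ε ≤ h lam := by
    intro ε hε hεlam
    have hmain : MonotoneOn h (Set.Icc ε lam) := by
      refine monotoneOn_of_deriv_nonneg (convex_Icc ε lam) ?_ ?_ ?_
      · intro x hx
        exact ((hh' x (lt_of_lt_of_le hε hx.1)).differentiableAt.continuousAt).continuousWithinAt
      · intro x hx
        rw [interior_Icc] at hx
        exact ((hh' x (lt_of_lt_of_le hε hx.1.le)).differentiableAt).differentiableWithinAt
      · intro x hx
        rw [interior_Icc] at hx
        have hx0 : 0 < x := lt_of_lt_of_le hε hx.1.le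
        rw [(hh' x hx0).deriv]
        have := hVle x hx0
        nlinarith
    exact hmain (Set.mem_Icc.2 ⟨le_refl ε, hεlam⟩) (Set.mem_Icc.2 ⟨hεlam, le_refl lam⟩) hεlam
  -- MVT step : ε * φ ε ≤ log Z (2 ε) - log Z ε
  have hMVT : ∀ ε : ℝ, 0 < ε → ε * (M1 ε / Z ε) ≤ Real.log (Z (2*ε)) - Real.log (Z ε) := by
    intro ε hε
    have h2ε : ε < 2 * ε := by linarith
    obtain ⟨ξ, hξ, hslope⟩ := exists_hasDerivAt_eq_slope (fun t => Real.log (Z t))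
      (fun t => M1 t / Z t) h2ε
      (fun x hx => ((hψ' x (lt_of_lt_of_le hε hx.1)).differentiableAt.continuousAt
        ).continuousWithinAt)
      (fun x hx => hψ' x (lt_of_lt_of_le hε hx.1.le))
    -- φ is monotone on [ε, ξ]
    have hφmono : M1 ε / Z ε ≤ M1 ξ / Z ξ := by
      have : MonotoneOn (fun t => M1 t / Z t) (Set.Icc ε ξ) := by
        refine monotoneOn_of_deriv_nonneg (convex_Icc ε ξ) ?_ ?_ ?_
        · intro x hx
          exact ((hφ'' x (lt_of_lt_of_le hε hx.1)).differentiableAt.continuousAt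
            ).continuousWithinAt
        · intro x hx
          rw [interior_Icc] at hx
          exact ((hφ'' x (lt_of_lt_of_le hε hx.1.le)).differentiableAt).differentiableWithinAt
        · intro x hx
          rw [interior_Icc] at hx
          have hx0 : 0 < x := lt_of_lt_of_le hε hx.1.le
          rw [(hφ'' x hx0).deriv]
          exact hVnn x hx0
      exact this (Set.mem_Icc.2 ⟨le_refl ε, hξ.1.le⟩) (Set.mem_Icc.2 ⟨hξ.1.le, le_refl ξ⟩) hξ.1.le
    have : M1 ξ / Z ξ = (Real.log (Z (2*ε)) - Real.log (Z ε)) / ε := by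
      have := hslope
      rw [show (2*ε - ε) = ε by ring] at this
      exact this
    calc ε * (M1 ε / Z ε) ≤ ε * (M1 ξ / Z ξ) :=
          mul_le_mul_of_nonneg_left hφmono hε.le
      _ = Real.log (Z (2*ε)) - Real.log (Z ε) := by
          rw [this, mul_div_cancel₀ _ hε.ne']
  -- limit of Z at 0⁺
  have hZlim : Filter.Tendsto Z (nhdsWithin 0 (Set.Ioi 0)) (nhds 1) := by
    have h1 : Filter.Tendsto Z (nhdsWithin 0 (Set.Ioi 0)) (nhds (∫ _, (1:ℝ) ∂P)) := by
      refine tendsto_integral_filter_of_dominated_convergence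
        (fun ω => Real.exp (f ω) + 1) ?_ ?_ ?_ ?_
      · exact Filter.Eventually.of_forall fun s => ((hfmeas.const_mul s).exp).aestronglyMeasurable
      · filter_upwards [Ioo_mem_nhdsGT_of_mem (Set.mem_Ico.2 ⟨le_refl (0:ℝ), zero_lt_one⟩)]
          with s hs
        filter_upwards with ω
        rw [Real.norm_eq_abs, abs_of_pos (Real.exp_pos _)]
        rcases le_or_gt 0 (f ω) with hx | hx
        · have : Real.exp (s * f ω) ≤ Real.exp (1 * f ω) := by
            apply Real.exp_le_exp.2
            nlinarith [hs.1, hs.2]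
          rw [one_mul] at this
          linarith
        · have : Real.exp (s * f ω) ≤ Real.exp 0 := by
            apply Real.exp_le_exp.2
            nlinarith [hs.1, hs.2]
          rw [Real.exp_zero] at this
          linarith [Real.exp_pos (f ω)]
      · simpa using (hexp 1 zero_le_one).add (integrable_const 1)
      · filter_upwards with ω
        have hcont : Filter.Tendsto (fun s : ℝ => Real.exp (s * f ω)) (nhds 0)
            (nhds (Real.exp (0 * f ω))) :=
          (Real.continuous_exp.comp (continuous_id.mul continuous_const)).tendsto 0
        rw [zero_mul, Real.exp_zero] at hcont
        exact hcont.mono_left nhdsWithin_le_nhds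
    simpa using h1
  have hZ2lim : Filter.Tendsto (fun ε => Z (2*ε)) (nhdsWithin 0 (Set.Ioi 0)) (nhds 1) := by
    refine hZlim.comp ?_
    refine tendsto_nhdsWithin_of_tendsto_nhds_of_eventually_within _ ?_ ?_
    · have : Filter.Tendsto (fun ε : ℝ => 2 * ε) (nhds 0) (nhds (2 * 0)) :=
        (continuous_const.mul continuous_id).tendsto 0
      rw [mul_zero] at this
      exact this.mono_left nhdsWithin_le_nhds
    · filter_upwards [self_mem_nhdsWithin] with ε hε
      simp only [Set.mem_Ioi] at hε ⊢
      linarith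
  have hloglim : Filter.Tendsto (fun ε => Real.log (Z ε)) (nhdsWithin 0 (Set.Ioi 0))
      (nhds 0) := by
    have := ((Real.continuousAt_log one_ne_zero).tendsto).comp hZlim
    simpa [Function.comp_def] using this
  have hlog2lim : Filter.Tendsto (fun ε => Real.log (Z (2*ε))) (nhdsWithin 0 (Set.Ioi 0))
      (nhds 0) := by
    have := ((Real.continuousAt_log one_ne_zero).tendsto).comp hZ2lim
    simpa [Function.comp_def] using this
  have hsqlim : Filter.Tendsto (fun ε : ℝ => c * Γ ^ 2 * ε ^ 2 / 2)
      (nhdsWithin 0 (Set.Ioi 0)) (nhds 0) := by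
    have : Filter.Tendsto (fun ε : ℝ => c * Γ ^ 2 * ε ^ 2 / 2) (nhds 0)
        (nhds (c * Γ ^ 2 * (0:ℝ) ^ 2 / 2)) := by
      exact ((continuous_const.mul (continuous_pow 2)).div_const 2).tendsto 0
    rw [show c * Γ ^ 2 * (0:ℝ) ^ 2 / 2 = 0 by ring] at this
    exact this.mono_left nhdsWithin_le_nhds
  have hT : Filter.Tendsto
      (fun ε => c * Γ ^ 2 * ε ^ 2 / 2 + 2 * Real.log (Z ε) - Real.log (Z (2*ε)))
      (nhdsWithin 0 (Set.Ioi 0)) (nhds 0) := by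
    have := (hsqlim.add (hloglim.const_mul 2)).sub hlog2lim
    simpa using this
  -- conclude h lam ≥ 0
  have hnonneg : 0 ≤ h lam := by
    refine le_of_tendsto hT ?_
    filter_upwards [Ioo_mem_nhdsGT_of_mem (Set.mem_Ico.2 ⟨le_refl (0:ℝ), hlam⟩)] with ε hε
    have hε0 : 0 < ε := hε.1
    have hεlam : ε ≤ lam := hε.2.le
    calc c * Γ ^ 2 * ε ^ 2 / 2 + 2 * Real.log (Z ε) - Real.log (Z (2*ε))
        = c * Γ ^ 2 * ε ^ 2 / 2 - (Real.log (Z (2*ε)) - Real.log (Z ε)) + Real.log (Z ε) := by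
          ring
      _ ≤ c * Γ ^ 2 * ε ^ 2 / 2 - ε * (M1 ε / Z ε) + Real.log (Z ε) := by
          have := hMVT ε hε0
          linarith
      _ = h ε := rfl
      _ ≤ h lam := hmono ε hε0 hεlam
  -- relEnt formula
  set g : Ω → ℝ := fun ω => lam * f ω with hgdef
  have hint : Integrable (fun ω => Real.exp (g ω)) P := hexp lam hlam.le
  have habs : P.tilted g ≪ P := tilted_absolutelyContinuous P g
  haveI : IsProbabilityMeasure (P.tilted g) := isProbabilityMeasure_tilted hint
  have hfQ : Integrable f (P.tilted g) :=
    maurer_tilt_integrable hfmeas (maurer_intA' hfmeas hexp hlam)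
  have hlogeq : (fun ω => Real.log (((P.tilted g).rnDeriv P) ω).toReal)
      =ᵐ[P.tilted g] fun ω => g ω - Real.log (Z lam) :=
    habs.ae_eq (log_rnDeriv_tilted_left_self hint)
  have hintg : Integrable (fun ω => g ω - Real.log (Z lam)) (P.tilted g) :=
    (hfQ.const_mul lam).sub (integrable_const _)
  have hintlog : Integrable (fun ω => Real.log (((P.tilted g).rnDeriv P) ω).toReal)
      (P.tilted g) := hintg.congr hlogeq.symm
  rw [relEnt, if_pos ⟨habs, hintlog⟩]
  have hval : ∫ ω, Real.log (((P.tilted g).rnDeriv P) ω).toReal ∂(P.tilted g)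
      = lam * (M1 lam / Z lam) - Real.log (Z lam) := by
    rw [integral_congr_ae hlogeq, integral_sub (hfQ.const_mul lam) (integrable_const _)]
    rw [integral_const]
    simp only [measure_univ, ENNReal.toReal_one, smul_eq_mul, one_mul, probReal_univ]
    congr 1
    rw [hgdef, integral_const_mul]
    congr 1
    exact maurer_integral_tilted f
  rw [hval]
  apply ENNReal.ofReal_le_ofReal
  have : lam * (M1 lam / Z lam) - Real.log (Z lam) ≤ c * Γ ^ 2 * lam ^ 2 / 2 := by
    have := hnonneg
    rw [hhdef] at this
    simp only at this
    linarith
  linarith [this]
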